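/- Let q̃ ∈ (0,1), P > 0 and α₀, α₁ ∈ ℂ. Define g(β) = q̃·sqrt((1 + Pβ(|α₀|² + |α₁|²))² − (2Pβ|α₀||α₁|)²) for β ≥ 0. Then there exists exactly one β ∈ [0, 1−q̃] such that g(β) = 1 − β. -/

import Mathlib

/-- Existence and uniqueness of the erasure fixed point `q̃ √(a²-b²) = 1-β` on `[0, 1-q̃]`
for the soft-handoff model with adaptive power control. -/
theorem erasure_fixed_point_exists_unique
    (qt P : ℝ) (hq0 : 0 < qt) (hq1 : qt < 1) (hP : 0 < P) (α₀ α₁ : ℂ) :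
    ∃! β : ℝ, β ∈ Set.Icc (0 : ℝ) (1 - qt) ∧
      qt * Real.sqrt ((1 + P * β * (‖α₀‖ ^ 2 + ‖α₁‖ ^ 2)) ^ 2 -
        (2 * P * β * ‖α₀‖ * ‖α₁‖) ^ 2) = 1 - β := by
  set x := ‖α₀‖ with hxdef
  set y := ‖α₁‖ with hydef
  have hx : 0 ≤ x := norm_nonneg _
  have hy : 0 ≤ y := norm_nonneg _
  set f : ℝ → ℝ := fun β =>
    qt * Real.sqrt ((1 + P * β * (x - y) ^ 2) * (1 + P * β * (x + y) ^ 2)) + β with hf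
  have hrw : ∀ β : ℝ, (1 + P * β * (x ^ 2 + y ^ 2)) ^ 2 - (2 * P * β * x * y) ^ 2
      = (1 + P * β * (x - y) ^ 2) * (1 + P * β * (x + y) ^ 2) := by intro β; ring
  have hq' : (0:ℝ) ≤ 1 - qt := by linarith
  -- monotonicity of the inside
  have hins : ∀ a b : ℝ, 0 ≤ a → a ≤ b →
      (1 + P * a * (x - y) ^ 2) * (1 + P * a * (x + y) ^ 2)
      ≤ (1 + P * b * (x - y) ^ 2) * (1 + P * b * (x + y) ^ 2) := by
    intro a b ha hab
    have h1 : 0 ≤ P * (b - a) * ((x - y) ^ 2 + (x + y) ^ 2) :=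
      mul_nonneg (mul_nonneg hP.le (by linarith)) (by positivity)
    have h2 : 0 ≤ P ^ 2 * ((b - a) * (b + a)) * ((x - y) ^ 2 * (x + y) ^ 2) :=
      mul_nonneg (mul_nonneg (by positivity) (mul_nonneg (by linarith) (by linarith)))
        (by positivity)
    nlinarith [h1, h2]
  have hins1 : ∀ b : ℝ, 0 ≤ b →
      (1:ℝ) ≤ (1 + P * b * (x - y) ^ 2) * (1 + P * b * (x + y) ^ 2) := by
    intro b hb
    have := hins 0 b le_rfl hb
    simpa using this
  have hsqrt1 : ∀ b : ℝ, 0 ≤ b →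
      (1:ℝ) ≤ Real.sqrt ((1 + P * b * (x - y) ^ 2) * (1 + P * b * (x + y) ^ 2)) := by
    intro b hb
    have := Real.sqrt_le_sqrt (hins1 b hb)
    simpa using this
  have hmono : StrictMonoOn f (Set.Icc 0 (1 - qt)) := by
    intro a ha b hb hab
    have h1 : Real.sqrt ((1 + P * a * (x - y) ^ 2) * (1 + P * a * (x + y) ^ 2))
        ≤ Real.sqrt ((1 + P * b * (x - y) ^ 2) * (1 + P * b * (x + y) ^ 2)) :=
      Real.sqrt_le_sqrt (hins a b ha.1 hab.le)
    have h2 : qt * Real.sqrt ((1 + P * a * (x - y) ^ 2) * (1 + P * a * (x + y) ^ 2))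
        ≤ qt * Real.sqrt ((1 + P * b * (x - y) ^ 2) * (1 + P * b * (x + y) ^ 2)) :=
      mul_le_mul_of_nonneg_left h1 hq0.le
    simp only [hf]
    linarith
  have hcont : ContinuousOn f (Set.Icc 0 (1 - qt)) := by
    apply Continuous.continuousOn
    exact (continuous_const.mul (Real.continuous_sqrt.comp (by continuity))).add continuous_id
  have hf0 : f 0 = qt := by simp [hf]
  have hftop : (1:ℝ) ≤ f (1 - qt) := by
    have := hsqrt1 (1 - qt) hq'
    have h2 : qt * 1 ≤ qt * Real.sqrt ((1 + P * (1 - qt) * (x - y) ^ 2) *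
        (1 + P * (1 - qt) * (x + y) ^ 2)) := mul_le_mul_of_nonneg_left this hq0.le
    simp only [hf]
    linarith
  -- existence via IVT
  have hmem : (1:ℝ) ∈ Set.Icc (f 0) (f (1 - qt)) := ⟨by rw [hf0]; linarith, hftop⟩
  have hIVT := intermediate_value_Icc hq' hcont hmem
  obtain ⟨β₀, hβ₀mem, hβ₀⟩ := hIVT
  have hiff : ∀ β : ℝ, β ∈ Set.Icc (0:ℝ) (1 - qt) →
      (qt * Real.sqrt ((1 + P * β * (x ^ 2 + y ^ 2)) ^ 2 -
        (2 * P * β * x * y) ^ 2) = 1 - β ↔ f β = 1) := by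
    intro β hβ
    rw [hrw β]
    simp only [hf]
    constructor <;> intro h <;> linarith
  refine ⟨β₀, ⟨hβ₀mem, (hiff β₀ hβ₀mem).2 hβ₀⟩, ?_⟩
  rintro β ⟨hβmem, hβeq⟩
  exact hmono.injOn hβmem hβ₀mem (((hiff β hβmem).1 hβeq).trans hβ₀.symm)
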